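/- Fix K ≥ 2, rates c : Fin K → ℝ with c_j ≥ 0 for all j, and interference values w : Fin K → ℝ≥0. For a permutation order of the users, define R(c, w-order) = ∑_{t=1}^{K} (w_{σ(t)} - w_{σ(t-1)}) e^{∑_{k=t}^{K} c_{σ(k)}} - w_{σ(K)} (with w_{σ(0)} := 0), i.e., the total power required under decoding order σ. If two adjacent positions ℓ, ℓ+1 in the order satisfy w_ℓ > w_{ℓ+1} (the user placed earlier has strictly larger w), then swapping these two users yields R' ≤ R; specifically R' − R = (w_{ℓ+1} − w_ℓ) e^{∑_{k=ℓ+2}^{K} c_k} (e^{c_ℓ} − 1)(e^{c_{ℓ+1}} − 1) ≤ 0. -/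

import Mathlib

/-- Total power required on one resource unit to deliver rate vector `c` (users indexed
`1,…,K` in decoding order, `w 0 = 0` by convention). -/
noncomputable def Rtot (K : ℕ) (w c : ℕ → ℝ) : ℝ :=
  (∑ t ∈ Finset.Icc 1 K, (w t - w (t - 1)) * Real.exp (∑ k ∈ Finset.Icc t K, c k)) - w K


lemma Rtot_abel (K : ℕ) (hK : 1 ≤ K) (w c : ℕ → ℝ) (hw0 : w 0 = 0) :
    Rtot K w c = ∑ t ∈ Finset.Icc 1 K,
      w t * (Real.exp (∑ k ∈ Finset.Icc t K, c k) -
        Real.exp (∑ k ∈ Finset.Icc (t + 1) K, c k)) := by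
  obtain ⟨K, rfl⟩ : ∃ K', K = K' + 1 := ⟨K - 1, by omega⟩
  set E : ℕ → ℝ := fun t => Real.exp (∑ k ∈ Finset.Icc t (K + 1), c k) with hE
  have hshift : ∑ t ∈ Finset.Icc 1 (K + 1), w (t - 1) * E t
      = ∑ t ∈ Finset.Icc 0 K, w t * E (t + 1) := by
    rw [show Finset.Icc 1 (K+1) = Finset.map (addRightEmbedding 1) (Finset.Icc 0 K) by
      simp, Finset.sum_map]
    simp [addRightEmbedding]
  have h0 : ∑ t ∈ Finset.Icc 0 K, w t * E (t + 1)
      = ∑ t ∈ Finset.Icc 1 K, w t * E (t + 1) := by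
    rw [Finset.Icc_eq_cons_Ioc (Nat.zero_le K), Finset.sum_cons, hw0,
      ← Finset.Icc_add_one_left_eq_Ioc]
    simp
  have htop : ∑ t ∈ Finset.Icc 1 (K + 1), w t * E (t + 1)
      = ∑ t ∈ Finset.Icc 1 K, w t * E (t + 1) + w (K + 1) * E (K + 2) := by
    exact Finset.sum_Icc_succ_top (by omega) _
  have hE2 : E (K + 2) = 1 := by
    simp [hE, Finset.Icc_eq_empty_of_lt (by omega : K + 1 < K + 2)]
  simp only [Rtot, sub_mul, mul_sub, Finset.sum_sub_distrib]
  rw [show (∑ t ∈ Finset.Icc 1 (K+1), w (t-1) * Real.exp (∑ k ∈ Finset.Icc t (K+1), c k))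
        = ∑ t ∈ Finset.Icc 1 (K+1), w (t - 1) * E t from rfl] at *
  rw [hshift, h0]
  have := htop
  rw [hE2] at this
  simp only [hE] at this ⊢
  linarith [this]


theorem stmt2 (K : ℕ) (hK : 2 ≤ K) (c w : ℕ → ℝ)
    (hc : ∀ j ∈ Finset.Icc 1 K, 0 ≤ c j)
    (hw0 : w 0 = 0) (hw : ∀ j, 0 ≤ w j)
    (ℓ : ℕ) (hℓ1 : 1 ≤ ℓ) (hℓK : ℓ + 1 ≤ K) (hswap : w (ℓ + 1) < w ℓ) :
    Rtot K (w ∘ Equiv.swap ℓ (ℓ + 1)) (c ∘ Equiv.swap ℓ (ℓ + 1)) - Rtot K w c =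
      (w (ℓ + 1) - w ℓ) * Real.exp (∑ k ∈ Finset.Icc (ℓ + 2) K, c k) *
        ((Real.exp (c ℓ) - 1) * (Real.exp (c (ℓ + 1)) - 1)) ∧
    Rtot K (w ∘ Equiv.swap ℓ (ℓ + 1)) (c ∘ Equiv.swap ℓ (ℓ + 1)) ≤ Rtot K w c := by
  set σ := Equiv.swap ℓ (ℓ + 1) with hσ
  have hσfix : ∀ t, t ≠ ℓ → t ≠ ℓ + 1 → σ t = t := fun t h1 h2 =>
    Equiv.swap_apply_of_ne_of_ne h1 h2
  have hσl : σ ℓ = ℓ + 1 := Equiv.swap_apply_left _ _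
  have hσl1 : σ (ℓ + 1) = ℓ := Equiv.swap_apply_right _ _
  -- sums of c ∘ σ over tails
  have hsum : ∀ t, t ≠ ℓ + 1 →
      ∑ k ∈ Finset.Icc t K, c (σ k) = ∑ k ∈ Finset.Icc t K, c k := by
    intro t ht
    rcases le_or_gt t ℓ with h | h
    · refine Finset.sum_nbij' (fun k => σ k) (fun k => σ k) ?_ ?_ ?_ ?_ ?_
      · intro a ha
        simp only [Finset.mem_Icc] at ha ⊢
        rcases eq_or_ne a ℓ with rfl | h1
        · rw [hσl]; omega
        rcases eq_or_ne a (ℓ + 1) with rfl | h2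
        · rw [hσl1]; omega
        · rw [hσfix a h1 h2]; omega
      · intro a ha
        simp only [Finset.mem_Icc] at ha ⊢
        rcases eq_or_ne a ℓ with rfl | h1
        · rw [hσl]; omega
        rcases eq_or_ne a (ℓ + 1) with rfl | h2
        · rw [hσl1]; omega
        · rw [hσfix a h1 h2]; omega
      · intro a _; exact Equiv.swap_apply_self _ _ _
      · intro a _; exact Equiv.swap_apply_self _ _ _
      · intro a _; rfl
    · refine Finset.sum_congr rfl fun k hk => ?_
      simp only [Finset.mem_Icc] at hk
      rw [hσfix k (by omega) (by omega)]
  have hsplit : ∀ (f : ℕ → ℝ) (a : ℕ), a ≤ K →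
      ∑ k ∈ Finset.Icc a K, f k = f a + ∑ k ∈ Finset.Icc (a + 1) K, f k := by
    intro f a ha
    rw [Finset.Icc_eq_cons_Ioc ha, Finset.sum_cons, ← Finset.Icc_add_one_left_eq_Ioc]
  have hsuml1 : ∑ k ∈ Finset.Icc (ℓ + 1) K, c (σ k)
      = c ℓ + ∑ k ∈ Finset.Icc (ℓ + 2) K, c k := by
    rw [hsplit (fun k => c (σ k)) (ℓ + 1) hℓK, hσl1, hsum (ℓ + 2) (by omega)]
  have hEl1 : ∑ k ∈ Finset.Icc (ℓ + 1) K, c k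
      = c (ℓ + 1) + ∑ k ∈ Finset.Icc (ℓ + 2) K, c k :=
    hsplit c (ℓ + 1) hℓK
  have hEl : ∑ k ∈ Finset.Icc ℓ K, c k
      = c ℓ + (c (ℓ + 1) + ∑ k ∈ Finset.Icc (ℓ + 2) K, c k) := by
    rw [hsplit c ℓ (by omega), hEl1]
  have hw0' : (w ∘ σ) 0 = 0 := by
    simp only [Function.comp_apply, hσfix 0 (by omega) (by omega), hw0]
  rw [Rtot_abel K (by omega) w c hw0, Rtot_abel K (by omega) (w ∘ σ) (c ∘ σ) hw0']
  have key : (∑ t ∈ Finset.Icc 1 K, (w ∘ σ) t *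
        (Real.exp (∑ k ∈ Finset.Icc t K, (c ∘ σ) k) -
          Real.exp (∑ k ∈ Finset.Icc (t + 1) K, (c ∘ σ) k))) -
      ∑ t ∈ Finset.Icc 1 K, w t *
        (Real.exp (∑ k ∈ Finset.Icc t K, c k) -
          Real.exp (∑ k ∈ Finset.Icc (t + 1) K, c k)) =
      (w (ℓ + 1) - w ℓ) * Real.exp (∑ k ∈ Finset.Icc (ℓ + 2) K, c k) *
        ((Real.exp (c ℓ) - 1) * (Real.exp (c (ℓ + 1)) - 1)) := by
    rw [← Finset.sum_sub_distrib]
    rw [← Finset.sum_subset (s₁ := {ℓ, ℓ + 1})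
      (by intro x hx; simp only [Finset.mem_insert, Finset.mem_singleton] at hx
          rcases hx with rfl | rfl <;> simp only [Finset.mem_Icc] <;> omega)
      (by intro x hx hnx
          simp only [Finset.mem_insert, Finset.mem_singleton, not_or] at hnx
          simp only [Function.comp_apply, hσfix x hnx.1 hnx.2, hsum x hnx.2,
            hsum (x + 1) (by omega)]
          ring)]
    rw [Finset.sum_pair (by omega : ℓ ≠ ℓ + 1)]
    simp only [Function.comp_apply, hσl, hσl1, hsuml1, hsum ℓ (by omega),
      hsum (ℓ + 2) (by omega), hEl, hEl1, Real.exp_add]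
    ring
  refine ⟨key, ?_⟩
  have hA := Real.exp_pos (∑ k ∈ Finset.Icc (ℓ + 2) K, c k)
  have ha : 1 ≤ Real.exp (c ℓ) := Real.one_le_exp (hc ℓ (by simp only [Finset.mem_Icc]; omega))
  have hb : 1 ≤ Real.exp (c (ℓ + 1)) :=
    Real.one_le_exp (hc (ℓ + 1) (by simp only [Finset.mem_Icc]; omega))
  have hprod : (w (ℓ + 1) - w ℓ) * Real.exp (∑ k ∈ Finset.Icc (ℓ + 2) K, c k) *
      ((Real.exp (c ℓ) - 1) * (Real.exp (c (ℓ + 1)) - 1)) ≤ 0 := by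
    apply mul_nonpos_of_nonpos_of_nonneg
    · nlinarith
    · exact mul_nonneg (by linarith) (by linarith)
  linarith [key, hprod]
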